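/- The type D odd Demazure operator satisfies x_{n-1}∂_n^d - ∂_n^d x_n = 1 and ∂_n^d x_{n-1} - x_n ∂_n^d = 1 as operators on Pol_n^-, where x_j denotes left multiplication. -/
import Mathlib


/-- `x_{n-1} ∂ₙᵈ - ∂ₙᵈ xₙ = 1` and `∂ₙᵈ x_{n-1} - xₙ ∂ₙᵈ = 1` as operators. -/
theorem stmt_12 (n : ℕ) (R : Type*) [Ring R] (x : Fin (n + 2) → R)
    (hx : ∀ a b, a ≠ b → x a * x b + x b * x a = 0)
    (s : R →+* R)
    (hs1 : s (x (Fin.last (n + 1))) = x ((Fin.last n).castSucc))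
    (hs2 : s (x ((Fin.last n).castSucc)) = x (Fin.last (n + 1)))
    (hs3 : ∀ j, j ≠ Fin.last (n + 1) → j ≠ (Fin.last n).castSucc → s (x j) = - x j)
    (D : R →ₗ[ℤ] R) (hD1 : D 1 = 0)
    (hDn : D (x (Fin.last (n + 1))) = -1)
    (hDp : D (x ((Fin.last n).castSucc)) = 1)
    (hDj : ∀ j, j ≠ Fin.last (n + 1) → j ≠ (Fin.last n).castSucc → D (x j) = 0)
    (hL : ∀ f g, D (f * g) = D f * g + s f * D g) :
    ∀ f : R,
      x ((Fin.last n).castSucc) * D f - D (x (Fin.last (n + 1)) * f) = f ∧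
      D (x ((Fin.last n).castSucc) * f) - x (Fin.last (n + 1)) * D f = f := by
  intro f
  rw [hL, hL, hDn, hDp, hs1, hs2]
  constructor <;> noncomm_ring
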